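/- Let λ ∈ K with dist(λ, q^{ℤ_p}) = |p|^{k+ε}|q-1| where k ∈ ℤ_{≥0} and ε ∈ [0,1). Then the series Λ(x) = Σ_{n≥1} ((λ-1)(λ-q)···(λ-q^{n-1}) / ((q-1)···(q^n-1))) x^n converges for |x| < |p|^{-(1/p^k)(ε/p - 1/(p-1))}. -/

import Mathlib

set_option linter.unusedSectionVars false

open Finset IsUltrametricDist

namespace LSRaux

variable {p : ℕ} [Fact p.Prime]

/-- p-adic binomial coefficient numerator/denominator. -/
noncomputable def pbinom (α : ℚ_[p]) (n : ℕ) : ℚ_[p] :=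
  (∏ i ∈ Finset.range n, (α - (i : ℚ_[p]))) / (n.factorial : ℚ_[p])

lemma one_lt_P : (1 : ℝ) < p := by exact_mod_cast (Fact.out : p.Prime).one_lt

lemma desc_prod {R : Type*} [CommRing R] (n : ℕ) (x : R) :
    (descPochhammer R n).eval x = ∏ t ∈ Finset.range n, (x - (t : R)) := by
  induction n with
  | zero => simp
  | succ n ih => rw [descPochhammer_succ_eval, ih, Finset.prod_range_succ]

lemma coe_prod {ι : Type*} (s : Finset ι) (f : ι → ℤ_[p]) :
    ((∏ t ∈ s, f t : ℤ_[p]) : ℚ_[p]) = ∏ t ∈ s, ((f t : ℤ_[p]) : ℚ_[p]) := by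
  classical
  induction s using Finset.cons_induction with
  | empty => simp
  | cons a s ha ih => rw [Finset.prod_cons, Finset.prod_cons, PadicInt.coe_mul, ih]

lemma pbinom_natCast (m n : ℕ) : pbinom ((m : ℕ) : ℚ_[p]) n = (m.choose n : ℚ_[p]) := by
  have h1 : (∏ t ∈ Finset.range n, (((m : ℕ) : ℚ_[p]) - (t : ℚ_[p])))
      = (m.descFactorial n : ℚ_[p]) := by
    rw [← desc_prod, descPochhammer_eval_eq_descFactorial]
  have h2 : (m.descFactorial n : ℚ_[p]) = (m.choose n : ℚ_[p]) * (n.factorial : ℚ_[p]) := by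
    rw [Nat.descFactorial_eq_factorial_mul_choose]; push_cast; ring
  rw [pbinom, h1, h2, mul_div_cancel_right₀]
  exact_mod_cast n.factorial_ne_zero

lemma norm_natCast_le_one (m : ℕ) : ‖((m : ℕ) : ℚ_[p])‖ ≤ 1 := by
  have := Padic.norm_int_le_one (p := p) (m : ℤ)
  simpa using this

lemma norm_pbinom_le_one (α : ℤ_[p]) (n : ℕ) : ‖pbinom (α : ℚ_[p]) n‖ ≤ 1 := by
  have hprod : (∏ t ∈ Finset.range n, ((α : ℚ_[p]) - (t : ℚ_[p])))
      = ((∏ t ∈ Finset.range n, (α - (t : ℤ_[p])) : ℤ_[p]) : ℚ_[p]) := by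
    rw [coe_prod]
    push_cast
    rfl
  have hnorm : ‖(∏ t ∈ Finset.range n, (α - (t : ℤ_[p])) : ℤ_[p])‖
      ≤ ‖((n.factorial : ℕ) : ℤ_[p])‖ := by
    have h := PadicInt.norm_ascPochhammer_le (p := p) n (α - (n : ℤ_[p]) + 1)
    rw [← descPochhammer_eval_eq_ascPochhammer ℤ_[p] α n, desc_prod] at h
    exact h
  have hfaceq : ‖((n.factorial : ℕ) : ℤ_[p])‖ = ‖((n.factorial : ℕ) : ℚ_[p])‖ := by
    rw [← PadicInt.padic_norm_e_of_padicInt]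
    norm_cast
  have hfac : (0:ℝ) < ‖((n.factorial : ℕ) : ℚ_[p])‖ := by
    rw [norm_pos_iff]
    exact_mod_cast n.factorial_ne_zero
  rw [pbinom, norm_div, hprod, PadicInt.padic_norm_e_of_padicInt, div_le_one hfac, ← hfaceq]
  exact hnorm

lemma norm_nat_inv_eq (j : ℕ) (hj : j ≠ 0) :
    ‖((j : ℕ) : ℚ_[p])‖⁻¹ = (p : ℝ) ^ (padicValNat p j : ℕ) := by
  have hj0 : ((j : ℕ) : ℚ_[p]) ≠ 0 := Nat.cast_ne_zero.mpr hj
  rw [Padic.norm_eq_zpow_neg_valuation hj0, Padic.valuation_natCast, ← zpow_neg, neg_neg, zpow_natCast]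

/-- Key estimate: `p^{v_p(j'+1)} * r^{j'} ≤ s^{j'}` where `s = p^{1/(p-1)} r`. -/
lemma key1 {r : ℝ} (hr0 : 0 ≤ r) (j' : ℕ) :
    ‖(((j' + 1 : ℕ)) : ℚ_[p])‖⁻¹ * r ^ j'
      ≤ ((p : ℝ) ^ ((1 : ℝ) / ((p : ℝ) - 1)) * r) ^ j' := by
  have hP1 : (1 : ℝ) < p := one_lt_P
  have hP0 : (0 : ℝ) < p := lt_trans one_pos hP1
  set v : ℕ := padicValNat p (j' + 1) with hv
  have hval : (v : ℝ) * ((p : ℝ) - 1) ≤ (j' : ℝ) := by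
    have hdvd : (p : ℕ) ^ v ∣ (j' + 1) := pow_padicValNat_dvd
    have hle : ((p : ℕ) ^ v : ℕ) ≤ j' + 1 := Nat.le_of_dvd (Nat.succ_pos _) hdvd
    have hle' : ((p : ℝ)) ^ v ≤ (j' : ℝ) + 1 := by exact_mod_cast hle
    have hbern : 1 + (v : ℝ) * ((p : ℝ) - 1) ≤ (1 + ((p : ℝ) - 1)) ^ v :=
      one_add_mul_le_pow (by linarith) v
    have : (1 : ℝ) + ((p : ℝ) - 1) = (p : ℝ) := by ring
    rw [this] at hbern
    linarith
  rw [norm_nat_inv_eq (j' + 1) (Nat.succ_ne_zero _), ← hv, mul_pow]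
  gcongr
  calc ((p : ℝ)) ^ v = (p : ℝ) ^ ((v : ℝ)) := (Real.rpow_natCast _ _).symm
    _ ≤ (p : ℝ) ^ (((1 : ℝ) / ((p : ℝ) - 1)) * (j' : ℝ)) := by
        rw [Real.rpow_le_rpow_left_iff hP1]
        rw [div_mul_eq_mul_div, le_div_iff₀ (by linarith)]
        linarith
    _ = ((p : ℝ) ^ ((1 : ℝ) / ((p : ℝ) - 1))) ^ (j' : ℕ) := by
        rw [Real.rpow_mul hP0.le, Real.rpow_natCast]

lemma choose_norm_le (d j : ℕ) (hj : j ≠ 0) :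
    ‖((d.choose j : ℕ) : ℚ_[p])‖ ≤ ‖((d : ℕ) : ℚ_[p])‖ * ‖((j : ℕ) : ℚ_[p])‖⁻¹ := by
  obtain ⟨j', rfl⟩ : ∃ j', j = j' + 1 := ⟨j - 1, by omega⟩
  cases d with
  | zero => simp [Nat.choose_eq_zero_of_lt (Nat.succ_pos j')]
  | succ d' =>
    have hid : (d' + 1) * d'.choose j' = (d' + 1).choose (j' + 1) * (j' + 1) :=
      Nat.add_one_mul_choose_eq d' j'
    have hcast : ((d' + 1 : ℕ) : ℚ_[p]) * ((d'.choose j' : ℕ) : ℚ_[p])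
        = (((d' + 1).choose (j' + 1) : ℕ) : ℚ_[p]) * ((j' + 1 : ℕ) : ℚ_[p]) := by
      exact_mod_cast congrArg (fun t : ℕ => (t : ℚ_[p])) hid
    have hjpos : (0:ℝ) < ‖((j' + 1 : ℕ) : ℚ_[p])‖ := by
      rw [norm_pos_iff]
      exact_mod_cast Nat.succ_ne_zero j'
    have hthis : ‖((d' + 1 : ℕ) : ℚ_[p])‖ * ‖((d'.choose j' : ℕ) : ℚ_[p])‖
        = ‖(((d' + 1).choose (j' + 1) : ℕ) : ℚ_[p])‖ * ‖((j' + 1 : ℕ) : ℚ_[p])‖ := by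
      rw [← norm_mul, ← norm_mul, hcast]
    have hkey : ‖(((d' + 1).choose (j' + 1) : ℕ) : ℚ_[p])‖ * ‖((j' + 1 : ℕ) : ℚ_[p])‖
        ≤ (‖((d' + 1 : ℕ) : ℚ_[p])‖ * ‖((j' + 1 : ℕ) : ℚ_[p])‖⁻¹) * ‖((j' + 1 : ℕ) : ℚ_[p])‖ := by
      rw [mul_assoc, inv_mul_cancel₀ hjpos.ne', mul_one, ← hthis]
      exact mul_le_of_le_one_right (norm_nonneg _) (norm_natCast_le_one _)
    exact le_of_mul_le_mul_right hkey hjpos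

lemma nat_diff_aux {r : ℝ} (hr0 : 0 ≤ r) (hr1 : r ≤ 1)
    (hs1 : (p : ℝ) ^ ((1 : ℝ) / ((p : ℝ) - 1)) * r ≤ 1)
    {n : ℕ} (hn : n ≠ 0) (m' d : ℕ) :
    ‖((((m' + d).choose n : ℕ)) : ℚ_[p]) - ((m'.choose n : ℕ) : ℚ_[p])‖ * r ^ n
      ≤ ‖((d : ℕ) : ℚ_[p])‖ * r := by
  have hs0 : 0 ≤ (p : ℝ) ^ ((1 : ℝ) / ((p : ℝ) - 1)) * r := by positivity
  rcases eq_or_lt_of_le hr0 with h0 | hrpos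
  · rw [← h0, zero_pow hn, mul_zero]
    positivity
  have hvan : (((m' + d).choose n : ℕ) : ℚ_[p])
      = ∑ ij ∈ Finset.HasAntidiagonal.antidiagonal n, ((d.choose ij.1 * m'.choose ij.2 : ℕ) : ℚ_[p]) := by
    rw [add_comm m' d, Nat.add_choose_eq]
    push_cast
    rfl
  have hmem : ((0 : ℕ), n) ∈ Finset.HasAntidiagonal.antidiagonal n := by simp
  have hsplit : (((m' + d).choose n : ℕ) : ℚ_[p]) - ((m'.choose n : ℕ) : ℚ_[p])
      = ∑ ij ∈ (Finset.HasAntidiagonal.antidiagonal n).erase ((0 : ℕ), n),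
          ((d.choose ij.1 * m'.choose ij.2 : ℕ) : ℚ_[p]) := by
    rw [hvan, ← Finset.add_sum_erase _ _ hmem]
    simp
  rw [hsplit, ← le_div_iff₀ (pow_pos hrpos n)]
  refine IsUltrametricDist.norm_sum_le_of_forall_le_of_nonneg (by positivity) ?_
  intro ij hij
  rw [le_div_iff₀ (pow_pos hrpos n)]
  have hij_mem : ij ∈ Finset.HasAntidiagonal.antidiagonal n := Finset.mem_of_mem_erase hij
  have hij_sum : ij.1 + ij.2 = n := Finset.HasAntidiagonal.mem_antidiagonal.mp hij_mem
  have hij_ne : ij ≠ ((0 : ℕ), n) := Finset.ne_of_mem_erase hij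
  have hij1 : ij.1 ≠ 0 := by
    intro h
    exact hij_ne (Prod.ext h (by omega))
  obtain ⟨a', ha'⟩ : ∃ a', ij.1 = a' + 1 := ⟨ij.1 - 1, by omega⟩
  have hpow : r ^ n = r ^ a' * r ^ (ij.2 + 1) := by
    rw [← pow_add]
    congr 1
    omega
  have hterm : ‖((d.choose ij.1 * m'.choose ij.2 : ℕ) : ℚ_[p])‖
      ≤ ‖((d : ℕ) : ℚ_[p])‖ * ‖((ij.1 : ℕ) : ℚ_[p])‖⁻¹ := by
    push_cast
    rw [norm_mul]
    calc ‖((d.choose ij.1 : ℕ) : ℚ_[p])‖ * ‖((m'.choose ij.2 : ℕ) : ℚ_[p])‖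
        ≤ ‖((d.choose ij.1 : ℕ) : ℚ_[p])‖ * 1 :=
          mul_le_mul_of_nonneg_left (norm_natCast_le_one _) (norm_nonneg _)
      _ = ‖((d.choose ij.1 : ℕ) : ℚ_[p])‖ := mul_one _
      _ ≤ _ := choose_norm_le d ij.1 hij1
  calc ‖((d.choose ij.1 * m'.choose ij.2 : ℕ) : ℚ_[p])‖ * r ^ n
      ≤ (‖((d : ℕ) : ℚ_[p])‖ * ‖((ij.1 : ℕ) : ℚ_[p])‖⁻¹) * (r ^ a' * r ^ (ij.2 + 1)) := by
        rw [← hpow]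
        exact mul_le_mul_of_nonneg_right hterm (by positivity)
    _ = ‖((d : ℕ) : ℚ_[p])‖ * ((‖(((a' + 1 : ℕ)) : ℚ_[p])‖⁻¹ * r ^ a') * r ^ (ij.2 + 1)) := by
        rw [ha']
        ring
    _ ≤ ‖((d : ℕ) : ℚ_[p])‖ * ((((p : ℝ) ^ ((1 : ℝ) / ((p : ℝ) - 1)) * r) ^ a') * r ^ (ij.2 + 1)) := by
        gcongr
        exact key1 hr0 a'
    _ ≤ ‖((d : ℕ) : ℚ_[p])‖ * (1 * r) := by
        gcongr
        · exact pow_le_one₀ hs0 hs1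
        · exact pow_le_of_le_one hr0 hr1 (Nat.succ_ne_zero _)
    _ = ‖((d : ℕ) : ℚ_[p])‖ * r := by ring

lemma nat_diff {r : ℝ} (hr0 : 0 ≤ r) (hr1 : r ≤ 1)
    (hs1 : (p : ℝ) ^ ((1 : ℝ) / ((p : ℝ) - 1)) * r ≤ 1)
    {n : ℕ} (hn : n ≠ 0) (m m' : ℕ) :
    ‖((m.choose n : ℕ) : ℚ_[p]) - ((m'.choose n : ℕ) : ℚ_[p])‖ * r ^ n
      ≤ ‖((m : ℕ) : ℚ_[p]) - ((m' : ℕ) : ℚ_[p])‖ * r := by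
  rcases le_total m' m with h | h
  · obtain ⟨d, rfl⟩ : ∃ d, m = m' + d := ⟨m - m', by omega⟩
    have hd : ((m' + d : ℕ) : ℚ_[p]) - ((m' : ℕ) : ℚ_[p]) = ((d : ℕ) : ℚ_[p]) := by
      push_cast
      ring
    rw [hd]
    exact nat_diff_aux hr0 hr1 hs1 hn m' d
  · obtain ⟨d, rfl⟩ : ∃ d, m' = m + d := ⟨m' - m, by omega⟩
    have hd : ((m : ℕ) : ℚ_[p]) - ((m + d : ℕ) : ℚ_[p]) = -((d : ℕ) : ℚ_[p]) := by
      push_cast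
      ring
    rw [hd, norm_neg, norm_sub_rev]
    exact nat_diff_aux hr0 hr1 hs1 hn m d

lemma coeff_bound {r : ℝ} (hr0 : 0 ≤ r) (hr1 : r ≤ 1)
    (hs1 : (p : ℝ) ^ ((1 : ℝ) / ((p : ℝ) - 1)) * r ≤ 1)
    {n : ℕ} (hn : n ≠ 0) (i : ℕ) (α : ℤ_[p]) :
    ‖pbinom (α : ℚ_[p]) n - ((i.choose n : ℕ) : ℚ_[p])‖ * r ^ n
      ≤ ‖(α : ℚ_[p]) - ((i : ℕ) : ℚ_[p])‖ * r := by
  refine DenseRange.induction_on PadicInt.denseRange_natCast α ?_ ?_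
  · have hcoe : Continuous fun β : ℤ_[p] => (β : ℚ_[p]) := continuous_subtype_val
    have h1 : Continuous fun β : ℤ_[p] =>
        ‖pbinom (β : ℚ_[p]) n - ((i.choose n : ℕ) : ℚ_[p])‖ * r ^ n := by
      unfold pbinom
      exact ((((continuous_finset_prod _ fun t _ => hcoe.sub continuous_const).div_const
        _).sub continuous_const).norm).mul continuous_const
    have h2 : Continuous fun β : ℤ_[p] => ‖(β : ℚ_[p]) - ((i : ℕ) : ℚ_[p])‖ * r :=
      ((hcoe.sub continuous_const).norm).mul continuous_const
    exact isClosed_le h1 h2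
  · intro m
    have hcast : ((m : ℤ_[p]) : ℚ_[p]) = ((m : ℕ) : ℚ_[p]) := by norm_cast
    rw [hcast, pbinom_natCast]
    exact nat_diff hr0 hr1 hs1 hn m i

lemma factorial_inv_le (n : ℕ) :
    ‖((n.factorial : ℕ) : ℚ_[p])‖⁻¹ ≤ (p : ℝ) ^ ((n : ℝ) / ((p : ℝ) - 1)) := by
  have hP1 : (1 : ℝ) < p := one_lt_P
  have hP0 : (0 : ℝ) < p := lt_trans one_pos hP1
  rw [norm_nat_inv_eq _ n.factorial_ne_zero]
  set v : ℕ := padicValNat p n.factorial with hv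
  have hple : 1 ≤ p := (Fact.out : p.Prime).one_lt.le
  have hnat : (p - 1) * v ≤ n := by
    have h := sub_one_mul_padicValNat_factorial (p := p) n
    rw [← hv] at h
    omega
  have hreal : ((p : ℝ) - 1) * (v : ℝ) ≤ (n : ℝ) := by
    have : (((p - 1) * v : ℕ) : ℝ) ≤ (n : ℝ) := by exact_mod_cast hnat
    rwa [Nat.cast_mul, Nat.cast_sub hple, Nat.cast_one] at this
  calc ((p : ℝ)) ^ v = (p : ℝ) ^ ((v : ℕ) : ℝ) := (Real.rpow_natCast _ _).symm
    _ ≤ (p : ℝ) ^ ((n : ℝ) / ((p : ℝ) - 1)) := by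
        rw [Real.rpow_le_rpow_left_iff hP1, le_div_iff₀ (by linarith)]
        linarith

lemma count_ge (m : ℕ) (hm : 0 < m) (z : ZMod m) (n : ℕ) :
    n / m ≤ (Finset.filter (fun i => ((i : ℕ) : ZMod m) = z) (Finset.range n)).card := by
  classical
  haveI : NeZero m := ⟨hm.ne'⟩
  set c := z.val with hc
  have hcz : ((c : ℕ) : ZMod m) = z := ZMod.natCast_rightInverse z
  have hcm : c < m := z.val_lt
  have hinj : Function.Injective fun j : ℕ => c + j * m := by
    intro a b hab
    simp only at hab
    have : a * m = b * m := by omega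
    exact Nat.eq_of_mul_eq_mul_right hm this
  have himg : (Finset.range (n / m)).image (fun j => c + j * m)
      ⊆ Finset.filter (fun i => ((i : ℕ) : ZMod m) = z) (Finset.range n) := by
    intro i hi
    simp only [Finset.mem_image, Finset.mem_range] at hi
    obtain ⟨j, hj, rfl⟩ := hi
    have h2 : (j + 1) * m ≤ (n / m) * m := Nat.mul_le_mul_right m hj
    have h3 : (n / m) * m ≤ n := Nat.div_mul_le_self n m
    have h1 : c + j * m < n := by
      have : c + j * m < (j + 1) * m := by
        calc c + j * m < m + j * m := by omega
          _ = (j + 1) * m := by ring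
      omega
    refine Finset.mem_filter.mpr ⟨Finset.mem_range.mpr h1, ?_⟩
    push_cast
    rw [ZMod.natCast_self, mul_zero, add_zero, hcz]
  calc n / m = ((Finset.range (n / m)).image fun j => c + j * m).card := by
        rw [Finset.card_image_of_injective _ hinj, Finset.card_range]
    _ ≤ _ := Finset.card_le_card himg

lemma geom_S (k : ℕ) :
    ∑ j ∈ Finset.Icc 1 k, ((p : ℝ)⁻¹) ^ j
      = 1 / ((p : ℝ) - 1) - ((p : ℝ)⁻¹) ^ k / ((p : ℝ) - 1) := by
  have hP1 : (1 : ℝ) < p := one_lt_P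
  have hP0 : (0 : ℝ) < p := lt_trans one_pos hP1
  have hPne : (p : ℝ) ≠ 0 := hP0.ne'
  have hPs : (p : ℝ) - 1 ≠ 0 := by linarith
  induction k with
  | zero => simp
  | succ k ih =>
    rw [Finset.sum_Icc_succ_top (by omega : 1 ≤ k + 1), ih, pow_succ]
    field_simp
    ring

section Kfield

variable {K : Type*} [NontriviallyNormedField K] [IsUltrametricDist K] [CompleteSpace K]
variable (ι : ℚ_[p] →+* K) (q : K)

lemma rpow_le_one' : (p : ℝ) ^ (-(1 : ℝ) / ((p : ℝ) - 1)) ≤ 1 := by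
  have hP1 : (1 : ℝ) < p := one_lt_P
  exact Real.rpow_le_one_of_one_le_of_nonpos hP1.le
    (div_nonpos_of_nonpos_of_nonneg (by norm_num) (by linarith))

lemma s_lt_one (hq1 : ‖q - 1‖ < (p : ℝ) ^ (-(1 : ℝ) / ((p : ℝ) - 1))) :
    (p : ℝ) ^ ((1 : ℝ) / ((p : ℝ) - 1)) * ‖q - 1‖ < 1 := by
  have hP1 : (1 : ℝ) < p := one_lt_P
  have hP0 : (0 : ℝ) < p := lt_trans one_pos hP1
  have h1 : (p : ℝ) ^ ((1 : ℝ) / ((p : ℝ) - 1)) * ‖q - 1‖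
      < (p : ℝ) ^ ((1 : ℝ) / ((p : ℝ) - 1)) * (p : ℝ) ^ (-(1 : ℝ) / ((p : ℝ) - 1)) := by
    exact mul_lt_mul_of_pos_left hq1 (Real.rpow_pos_of_pos hP0 _)
  calc (p : ℝ) ^ ((1 : ℝ) / ((p : ℝ) - 1)) * ‖q - 1‖
      < (p : ℝ) ^ ((1 : ℝ) / ((p : ℝ) - 1)) * (p : ℝ) ^ (-(1 : ℝ) / ((p : ℝ) - 1)) := h1
    _ = (p : ℝ) ^ ((1 : ℝ) / ((p : ℝ) - 1) + -(1 : ℝ) / ((p : ℝ) - 1)) :=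
        (Real.rpow_add hP0 _ _).symm
    _ = 1 := by
        rw [show (1 : ℝ) / ((p : ℝ) - 1) + -(1 : ℝ) / ((p : ℝ) - 1) = 0 by ring, Real.rpow_zero]

lemma norm_lt_one (hq1 : ‖q - 1‖ < (p : ℝ) ^ (-(1 : ℝ) / ((p : ℝ) - 1))) : ‖q - 1‖ < 1 :=
  lt_of_lt_of_le hq1 rpow_le_one'

lemma summable_F (hι : ∀ x : ℚ_[p], ‖ι x‖ = ‖x‖) (hq1 : ‖q - 1‖ < (p : ℝ) ^ (-(1 : ℝ) / ((p : ℝ) - 1))) (α : ℤ_[p]) :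
    Summable fun n : ℕ => ι (pbinom (α : ℚ_[p]) n) * (q - 1) ^ n := by
  refine Summable.of_norm_bounded (g := fun n => ‖q - 1‖ ^ n)
    (summable_geometric_of_lt_one (norm_nonneg _) (norm_lt_one q hq1)) ?_
  intro n
  rw [norm_mul, norm_pow, hι]
  exact mul_le_of_le_one_left (by positivity) (norm_pbinom_le_one α n)

lemma qpow_eq_tsum (i : ℕ) :
    (q : K) ^ i = ∑' n : ℕ, ((i.choose n : ℕ) : K) * (q - 1) ^ n := by
  rw [tsum_eq_sum (s := Finset.range (i + 1)) ?side]
  case side =>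
    intro b hb
    rw [Finset.mem_range, not_lt] at hb
    rw [Nat.choose_eq_zero_of_lt (by omega), Nat.cast_zero, zero_mul]
  have hq : q = (q - 1) + 1 := by ring
  calc (q : K) ^ i = ((q - 1) + 1) ^ i := by rw [← hq]
    _ = ∑ m ∈ Finset.range (i + 1), (q - 1) ^ m * 1 ^ (i - m) * (i.choose m : K) :=
        add_pow _ _ _
    _ = ∑ m ∈ Finset.range (i + 1), ((i.choose m : ℕ) : K) * (q - 1) ^ m := by
        refine Finset.sum_congr rfl fun m _ => ?_
        rw [one_pow, mul_one, mul_comm]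

lemma summable_choose (i : ℕ) :
    Summable fun n : ℕ => ((i.choose n : ℕ) : K) * (q - 1) ^ n := by
  refine summable_of_ne_finset_zero (s := Finset.range (i + 1)) ?_
  intro b hb
  rw [Finset.mem_range, not_lt] at hb
  rw [Nat.choose_eq_zero_of_lt (by omega), Nat.cast_zero, zero_mul]

lemma F_sub_qpow (hι : ∀ x : ℚ_[p], ‖ι x‖ = ‖x‖) (hq1 : ‖q - 1‖ < (p : ℝ) ^ (-(1 : ℝ) / ((p : ℝ) - 1))) (α : ℤ_[p]) (i : ℕ) :
    ‖(∑' n : ℕ, ι (pbinom (α : ℚ_[p]) n) * (q - 1) ^ n) - q ^ i‖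
      ≤ ‖(α : ℚ_[p]) - ((i : ℕ) : ℚ_[p])‖ * ‖q - 1‖ := by
  have hr0 : (0 : ℝ) ≤ ‖q - 1‖ := norm_nonneg _
  have hr1 : ‖q - 1‖ ≤ 1 := (norm_lt_one q hq1).le
  have hs1 : (p : ℝ) ^ ((1 : ℝ) / ((p : ℝ) - 1)) * ‖q - 1‖ ≤ 1 := (s_lt_one q hq1).le
  rw [qpow_eq_tsum, ← Summable.tsum_sub (summable_F ι q hι hq1 α) (summable_choose q i)]
  refine IsUltrametricDist.norm_tsum_le_of_forall_le_of_nonneg (by positivity) ?_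
  intro n
  rcases eq_or_ne n 0 with rfl | hn
  · simp only [pbinom, Finset.range_zero, Finset.prod_empty, Nat.factorial_zero,
      Nat.cast_one, div_one, map_one, Nat.choose_zero_right, pow_zero, mul_one]
    simp only [Nat.cast_one, sub_self, norm_zero]
    positivity
  · have hcast : ((i.choose n : ℕ) : K) = ι ((i.choose n : ℕ) : ℚ_[p]) := (map_natCast ι _).symm
    rw [hcast, ← sub_mul, ← map_sub, norm_mul, norm_pow, hι]
    exact coeff_bound hr0 hr1 hs1 hn i α

lemma qpow_sub_one (hq1 : ‖q - 1‖ < (p : ℝ) ^ (-(1 : ℝ) / ((p : ℝ) - 1))) (hι' : ∀ x : ℚ_[p], ‖ι x‖ = ‖x‖)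
    (hqne : q ≠ 1) (m : ℕ) (hm : m ≠ 0) :
    ‖((m : ℕ) : ℚ_[p])‖ * ‖q - 1‖ ≤ ‖q ^ m - 1‖ := by
  have hr0 : (0 : ℝ) < ‖q - 1‖ := by
    rw [norm_pos_iff, sub_ne_zero]
    exact hqne
  have hr1 : ‖q - 1‖ ≤ 1 := (norm_lt_one q hq1).le
  have hs1 : (p : ℝ) ^ ((1 : ℝ) / ((p : ℝ) - 1)) * ‖q - 1‖ < 1 := s_lt_one q hq1
  have hs0 : (0 : ℝ) ≤ (p : ℝ) ^ ((1 : ℝ) / ((p : ℝ) - 1)) * ‖q - 1‖ := by positivity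
  have hmpos : (0 : ℝ) < ‖((m : ℕ) : ℚ_[p])‖ := by
    rw [norm_pos_iff]
    exact_mod_cast hm
  -- decomposition
  have hset : Finset.range (m + 1) = insert 0 (insert 1 (Finset.Ico 2 (m + 1))) := by
    ext t
    simp only [Finset.mem_range, Finset.mem_insert, Finset.mem_Ico]
    omega
  have hsum : (q : K) ^ m = ∑ n ∈ Finset.range (m + 1), ((m.choose n : ℕ) : K) * (q - 1) ^ n := by
    rw [qpow_eq_tsum]
    exact tsum_eq_sum (by
      intro b hb
      rw [Finset.mem_range, not_lt] at hb
      rw [Nat.choose_eq_zero_of_lt (by omega), Nat.cast_zero, zero_mul])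
  set T : K := ∑ n ∈ Finset.Ico 2 (m + 1), ((m.choose n : ℕ) : K) * (q - 1) ^ n with hT
  have hdecomp : q ^ m - 1 = ((m : ℕ) : K) * (q - 1) + T := by
    rw [hsum, hset, Finset.sum_insert (by simp), Finset.sum_insert (by simp)]
    simp only [Nat.choose_zero_right, Nat.cast_one, pow_zero, mul_one, Nat.choose_one_right,
      pow_one]
    ring
  have hmK : ‖((m : ℕ) : K)‖ = ‖((m : ℕ) : ℚ_[p])‖ := by
    rw [← map_natCast ι, hι']
  have hTle : ‖T‖ ≤ ‖((m : ℕ) : ℚ_[p])‖ * ‖q - 1‖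
      * ((p : ℝ) ^ ((1 : ℝ) / ((p : ℝ) - 1)) * ‖q - 1‖) := by
    rw [hT]
    refine IsUltrametricDist.norm_sum_le_of_forall_le_of_nonneg (by positivity) ?_
    intro n hn
    rw [Finset.mem_Ico] at hn
    obtain ⟨n', rfl⟩ : ∃ n', n = n' + 2 := ⟨n - 2, by omega⟩
    have hchoose : ‖((m.choose (n' + 2) : ℕ) : K)‖
        ≤ ‖((m : ℕ) : ℚ_[p])‖ * ‖(((n' + 2 : ℕ)) : ℚ_[p])‖⁻¹ := by
      rw [← map_natCast ι, hι']
      exact choose_norm_le m (n' + 2) (by omega)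
    have hkey := key1 (p := p) (norm_nonneg (q - 1)) (n' + 1)
    calc ‖((m.choose (n' + 2) : ℕ) : K) * (q - 1) ^ (n' + 2)‖
        = ‖((m.choose (n' + 2) : ℕ) : K)‖ * (‖q - 1‖ ^ (n' + 1) * ‖q - 1‖) := by
          rw [norm_mul, norm_pow, pow_succ]
      _ ≤ (‖((m : ℕ) : ℚ_[p])‖ * ‖(((n' + 2 : ℕ)) : ℚ_[p])‖⁻¹)
            * (‖q - 1‖ ^ (n' + 1) * ‖q - 1‖) := by
          gcongr
      _ = ‖((m : ℕ) : ℚ_[p])‖ * ‖q - 1‖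
            * (‖(((n' + 2 : ℕ)) : ℚ_[p])‖⁻¹ * ‖q - 1‖ ^ (n' + 1)) := by ring
      _ ≤ ‖((m : ℕ) : ℚ_[p])‖ * ‖q - 1‖
            * (((p : ℝ) ^ ((1 : ℝ) / ((p : ℝ) - 1)) * ‖q - 1‖) ^ (n' + 1)) := by
          gcongr
      _ ≤ ‖((m : ℕ) : ℚ_[p])‖ * ‖q - 1‖
            * ((p : ℝ) ^ ((1 : ℝ) / ((p : ℝ) - 1)) * ‖q - 1‖) := by
          gcongr
          exact pow_le_of_le_one hs0 hs1.le (Nat.succ_ne_zero _)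
  have hTlt : ‖T‖ < ‖((m : ℕ) : ℚ_[p])‖ * ‖q - 1‖ := by
    refine lt_of_le_of_lt hTle ?_
    calc ‖((m : ℕ) : ℚ_[p])‖ * ‖q - 1‖ * ((p : ℝ) ^ ((1 : ℝ) / ((p : ℝ) - 1)) * ‖q - 1‖)
        < ‖((m : ℕ) : ℚ_[p])‖ * ‖q - 1‖ * 1 := by
          exact mul_lt_mul_of_pos_left hs1 (by positivity)
      _ = ‖((m : ℕ) : ℚ_[p])‖ * ‖q - 1‖ := mul_one _
  -- ultrametric: dominant term
  have hsplit : ((m : ℕ) : K) * (q - 1) = (q ^ m - 1) - T := by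
    rw [hdecomp]
    ring
  have hle : ‖((m : ℕ) : ℚ_[p])‖ * ‖q - 1‖ ≤ max ‖q ^ m - 1‖ ‖T‖ := by
    calc ‖((m : ℕ) : ℚ_[p])‖ * ‖q - 1‖ = ‖((m : ℕ) : K) * (q - 1)‖ := by
          rw [norm_mul, hmK]
      _ = ‖(q ^ m - 1) + (-T)‖ := by rw [hsplit, sub_eq_add_neg]
      _ ≤ max ‖q ^ m - 1‖ ‖(-T)‖ := IsUltrametricDist.norm_add_le_max _ _
      _ = max ‖q ^ m - 1‖ ‖T‖ := by rw [norm_neg]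
  rcases max_cases ‖q ^ m - 1‖ ‖T‖ with ⟨heq, _⟩ | ⟨heq, _⟩
  · rwa [heq] at hle
  · rw [heq] at hle
    linarith

end Kfield

lemma cond_iff (a : ℤ_[p]) (j i : ℕ) :
    ‖a - (i : ℤ_[p])‖ ≤ (p : ℝ) ^ (-(j : ℝ)) ↔ ((i : ℕ) : ZMod (p ^ j)) = PadicInt.toZModPow j a := by
  have h1 : (p : ℝ) ^ (-(j : ℝ)) = ((p : ℝ) ^ (-(j : ℤ)) : ℝ) := by
    rw [← Real.rpow_intCast]
    norm_num
  rw [h1, PadicInt.norm_le_pow_iff_mem_span_pow, ← PadicInt.ker_toZModPow, RingHom.mem_ker,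
    map_sub, sub_eq_zero, map_natCast, eq_comm]

lemma rpow_sum_eq {s : Finset ℕ} (f : ℕ → ℝ) :
    (p : ℝ) ^ (∑ i ∈ s, f i) = ∏ i ∈ s, (p : ℝ) ^ (f i) := by
  classical
  have hP0 : (0 : ℝ) < p := lt_trans one_pos one_lt_P
  induction s using Finset.cons_induction with
  | empty => simp
  | cons a s ha ih => rw [Finset.sum_cons, Finset.prod_cons, Real.rpow_add hP0, ih]

lemma M_le (a : ℤ_[p]) (k'' : ℕ) (e : ℝ) (he0 : 0 ≤ e) (he1 : e ≤ 1) (i : ℕ) :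
    max ((p : ℝ) ^ (-((k'' : ℝ) + e))) ‖a - (i : ℤ_[p])‖
      ≤ (p : ℝ) ^ (-(((((Finset.Icc 1 k'').filter
            (fun j : ℕ => ‖a - (i : ℤ_[p])‖ ≤ (p : ℝ) ^ (-(j : ℝ)))).card : ℝ)
          + e * (if ‖a - (i : ℤ_[p])‖ ≤ (p : ℝ) ^ (-((k'' + 1 : ℕ) : ℝ)) then (1:ℝ) else 0)))) := by
  have hP1 : (1 : ℝ) < p := one_lt_P
  have hP0 : (0 : ℝ) < p := lt_trans one_pos hP1
  by_cases hc : ‖a - (i : ℤ_[p])‖ ≤ (p : ℝ) ^ (-((k'' + 1 : ℕ) : ℝ))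
  · have hfilter : (Finset.Icc 1 k'').filter
        (fun j : ℕ => ‖a - (i : ℤ_[p])‖ ≤ (p : ℝ) ^ (-(j : ℝ))) = Finset.Icc 1 k'' := by
      refine Finset.filter_true_of_mem ?_
      intro j hj
      refine le_trans hc ?_
      rw [Real.rpow_le_rpow_left_iff hP1]
      have h2 := (Finset.mem_Icc.mp hj).2
      have h3 : (j : ℝ) ≤ (k'' : ℝ) + 1 := by exact_mod_cast Nat.le_succ_of_le h2
      push_cast
      linarith
    rw [hfilter, if_pos hc, Nat.card_Icc]
    simp only [Nat.add_sub_cancel, mul_one]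
    refine max_le ?_ ?_
    · rw [Real.rpow_le_rpow_left_iff hP1]
    · refine le_trans hc ?_
      rw [Real.rpow_le_rpow_left_iff hP1]
      push_cast
      linarith
  · have hne : a - (i : ℤ_[p]) ≠ 0 := by
      intro h
      apply hc
      rw [h, norm_zero]
      positivity
    have hv0 : (0 : ℤ) ≤ ((a - (i : ℤ_[p])).valuation : ℤ) := Int.natCast_nonneg _
    set v : ℤ := ((a - (i : ℤ_[p])).valuation : ℤ) with hv
    have hnorm : ‖a - (i : ℤ_[p])‖ = (p : ℝ) ^ ((-v : ℤ) : ℝ) := by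
      rw [PadicInt.norm_eq_zpow_neg_valuation hne, ← Real.rpow_intCast, ← hv]
    have hcondIff : ∀ j : ℕ, (‖a - (i : ℤ_[p])‖ ≤ (p : ℝ) ^ (-(j : ℝ))) ↔ (j : ℤ) ≤ v := by
      intro j
      rw [hnorm, Real.rpow_le_rpow_left_iff hP1]
      constructor
      · intro h
        have : (j : ℝ) ≤ (v : ℝ) := by push_cast at h ⊢; linarith
        exact_mod_cast this
      · intro h
        have : (j : ℝ) ≤ (v : ℝ) := by exact_mod_cast h
        push_cast
        linarith
    have hvk : v ≤ (k'' : ℤ) := by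
      by_contra hlt
      push_neg at hlt
      exact hc ((hcondIff (k'' + 1)).mpr (by push_cast; omega))
    have hfilter : (Finset.Icc 1 k'').filter
        (fun j : ℕ => ‖a - (i : ℤ_[p])‖ ≤ (p : ℝ) ^ (-(j : ℝ))) = Finset.Icc 1 v.toNat := by
      ext j
      simp only [Finset.mem_filter, Finset.mem_Icc, hcondIff]
      omega
    rw [hfilter, if_neg hc, Nat.card_Icc]
    simp only [Nat.add_sub_cancel, mul_zero, add_zero]
    have hvt : ((v.toNat : ℕ) : ℝ) = ((v : ℤ) : ℝ) := by exact_mod_cast Int.toNat_of_nonneg hv0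
    refine max_le ?_ ?_
    · rw [Real.rpow_le_rpow_left_iff hP1, hvt]
      have h5 : ((v : ℤ) : ℝ) ≤ (k'' : ℝ) := by exact_mod_cast hvk
      linarith
    · rw [hnorm, Real.rpow_le_rpow_left_iff hP1, hvt]
      push_cast
      linarith

lemma A_ge (a : ℤ_[p]) (j n : ℕ) :
    (n : ℝ) * ((p : ℝ)⁻¹) ^ j - 1
      ≤ (((Finset.range n).filter
          (fun i : ℕ => ‖a - (i : ℤ_[p])‖ ≤ (p : ℝ) ^ (-(j : ℝ)))).card : ℝ) := by
  have hp : 0 < p := (Fact.out : p.Prime).pos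
  have hpj : 0 < p ^ j := pow_pos hp j
  have hfe : (Finset.range n).filter (fun i : ℕ => ‖a - (i : ℤ_[p])‖ ≤ (p : ℝ) ^ (-(j : ℝ)))
      = (Finset.range n).filter
          (fun i : ℕ => ((i : ℕ) : ZMod (p ^ j)) = PadicInt.toZModPow j a) := by
    apply Finset.filter_congr
    intro i _
    exact cond_iff a j i
  rw [hfe]
  have hcount := count_ge (p ^ j) hpj (PadicInt.toZModPow j a) n
  have hd := Nat.div_add_mod n (p ^ j)
  have hm := Nat.mod_lt n hpj
  have h1 : n < p ^ j * (n / p ^ j) + p ^ j := by omega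
  have h2 : (n : ℝ) < ((p ^ j : ℕ) : ℝ) * ((n / p ^ j : ℕ) : ℝ) + ((p ^ j : ℕ) : ℝ) := by
    exact_mod_cast h1
  have hPj : (0 : ℝ) < ((p ^ j : ℕ) : ℝ) := by exact_mod_cast hpj
  have hinv : ((p : ℝ)⁻¹) ^ j = (((p ^ j : ℕ) : ℝ))⁻¹ := by
    rw [inv_pow]
    push_cast
    rfl
  have h3 : (n : ℝ) * ((p : ℝ)⁻¹) ^ j - 1 ≤ ((n / p ^ j : ℕ) : ℝ) := by
    rw [hinv, ← div_eq_mul_inv, sub_le_iff_le_add, div_le_iff₀ hPj]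
    nlinarith [h2]
  refine le_trans h3 ?_
  exact_mod_cast hcount

section Main

variable {K : Type*} [NontriviallyNormedField K] [IsUltrametricDist K] [CompleteSpace K]

lemma main (ι : ℚ_[p] →+* K) (hι : ∀ x : ℚ_[p], ‖ι x‖ = ‖x‖) (q : K)
    (hq1 : ‖q - 1‖ < (p : ℝ) ^ (-(1 : ℝ) / ((p : ℝ) - 1))) (hqne : q ≠ 1)
    (lam : K) (k'' : ℕ) (e δ : ℝ) (he0 : 0 ≤ e) (he1 : e ≤ 1) (hδ0 : 0 ≤ δ)
    (a : ℤ_[p])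
    (ha : ‖lam - ∑' n : ℕ, ι (pbinom (a : ℚ_[p]) n) * (q - 1) ^ n‖
      ≤ (p : ℝ) ^ (δ - ((k'' : ℝ) + e)) * ‖q - 1‖)
    (x : K)
    (hx : ‖x‖ * (p : ℝ) ^ (δ + 1 / ((p : ℝ) - 1) - (∑ j ∈ Finset.Icc 1 k'', ((p : ℝ)⁻¹) ^ j)
        - e * ((p : ℝ)⁻¹) ^ (k'' + 1)) < 1) :
    Summable fun n : ℕ =>
      (∏ i ∈ Finset.range n, (lam - q ^ i)) /
        (∏ i ∈ Finset.range n, (q ^ (i + 1) - 1)) * x ^ n := by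
  have hP1 : (1 : ℝ) < p := one_lt_P
  have hP0 : (0 : ℝ) < p := lt_trans one_pos hP1
  set r : ℝ := ‖q - 1‖ with hr
  have hr0 : 0 < r := by
    rw [hr, norm_pos_iff, sub_ne_zero]
    exact hqne
  set S : ℝ := ∑ j ∈ Finset.Icc 1 k'', ((p : ℝ)⁻¹) ^ j with hS
  set u : ℝ := ((p : ℝ)⁻¹) ^ (k'' + 1) with hu
  set E : ℝ := δ + 1 / ((p : ℝ) - 1) - S - e * u with hE
  -- definitions
  set F : K := ∑' n : ℕ, ι (pbinom (a : ℚ_[p]) n) * (q - 1) ^ n with hF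
  set Mi : ℕ → ℝ := fun i => max ((p : ℝ) ^ (-((k'' : ℝ) + e))) ‖a - (i : ℤ_[p])‖ with hMi
  set cnt : ℕ → ℕ := fun i => ((Finset.Icc 1 k'').filter
      (fun j : ℕ => ‖a - (i : ℤ_[p])‖ ≤ (p : ℝ) ^ (-(j : ℝ)))).card with hcnt
  set Ti : ℕ → ℝ := fun i =>
      if ‖a - (i : ℤ_[p])‖ ≤ (p : ℝ) ^ (-((k'' + 1 : ℕ) : ℝ)) then (1:ℝ) else 0 with hTi
  set A : ℕ → ℕ → ℕ := fun j n => ((Finset.range n).filter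
      (fun i : ℕ => ‖a - (i : ℤ_[p])‖ ≤ (p : ℝ) ^ (-(j : ℝ)))).card with hA
  have hMi_nonneg : ∀ i : ℕ, 0 ≤ Mi i := fun i =>
    le_trans (Real.rpow_pos_of_pos hP0 _).le (le_max_left _ _)
  have hPδ : (1 : ℝ) ≤ (p : ℝ) ^ δ := by
    rw [show (1:ℝ) = (p:ℝ) ^ (0:ℝ) from (Real.rpow_zero _).symm]
    exact (Real.rpow_le_rpow_left_iff hP1).mpr hδ0
  -- step: pointwise bound on numerator factors
  have hstep : ∀ i : ℕ, ‖lam - q ^ i‖ ≤ ((p : ℝ) ^ δ * r) * Mi i := by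
    intro i
    have hsplit : lam - q ^ i = (lam - F) + (F - q ^ i) := by ring
    have h1 : ‖lam - q ^ i‖ ≤ max ‖lam - F‖ ‖F - q ^ i‖ := by
      rw [hsplit]
      exact IsUltrametricDist.norm_add_le_max _ _
    refine h1.trans (max_le ?_ ?_)
    · calc ‖lam - F‖ ≤ (p : ℝ) ^ (δ - ((k'' : ℝ) + e)) * r := ha
        _ = ((p : ℝ) ^ δ * r) * (p : ℝ) ^ (-((k'' : ℝ) + e)) := by
            rw [show δ - ((k'' : ℝ) + e) = δ + (-((k'' : ℝ) + e)) by ring, Real.rpow_add hP0]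
            ring
        _ ≤ ((p : ℝ) ^ δ * r) * Mi i := by
            refine mul_le_mul_of_nonneg_left (le_max_left _ _) (by positivity)
    · have h2 : ‖F - q ^ i‖ ≤ ‖a - (i : ℤ_[p])‖ * r := by
        have h3 := F_sub_qpow ι q hι hq1 a i
        have h4 : ‖(a : ℚ_[p]) - ((i : ℕ) : ℚ_[p])‖ = ‖a - (i : ℤ_[p])‖ := by
          rw [← PadicInt.padic_norm_e_of_padicInt]
          congr 1
        rw [h4] at h3
        exact h3
      calc ‖F - q ^ i‖ ≤ ‖a - (i : ℤ_[p])‖ * r := h2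
        _ ≤ Mi i * r := mul_le_mul_of_nonneg_right (le_max_right _ _) hr0.le
        _ = 1 * (r * Mi i) := by ring
        _ ≤ (p : ℝ) ^ δ * (r * Mi i) := by
            refine mul_le_mul_of_nonneg_right hPδ (by positivity)
        _ = ((p : ℝ) ^ δ * r) * Mi i := by ring
  -- per-n bound
  have hbound : ∀ n : ℕ,
      ‖(∏ i ∈ Finset.range n, (lam - q ^ i)) /
        (∏ i ∈ Finset.range n, (q ^ (i + 1) - 1)) * x ^ n‖
      ≤ (p : ℝ) ^ ((k'' : ℝ) + e) * (‖x‖ * (p : ℝ) ^ E) ^ n := by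
    intro n
    have hfac_pos : (0 : ℝ) < ‖((n.factorial : ℕ) : ℚ_[p])‖ := by
      rw [norm_pos_iff]
      exact_mod_cast n.factorial_ne_zero
    -- denominator
    have hden : ‖((n.factorial : ℕ) : ℚ_[p])‖ * r ^ n
        ≤ ‖∏ i ∈ Finset.range n, (q ^ (i + 1) - 1)‖ := by
      rw [norm_prod]
      have hfacprod : ‖((n.factorial : ℕ) : ℚ_[p])‖
          = ∏ i ∈ Finset.range n, ‖(((i + 1 : ℕ)) : ℚ_[p])‖ := by
        rw [← norm_prod]
        congr 1
        rw [← Finset.prod_range_add_one_eq_factorial]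
        push_cast
        rfl
      calc ‖((n.factorial : ℕ) : ℚ_[p])‖ * r ^ n
          = ∏ i ∈ Finset.range n, (‖(((i + 1 : ℕ)) : ℚ_[p])‖ * r) := by
            rw [Finset.prod_mul_distrib, Finset.prod_const, ← hfacprod]
            rw [Finset.card_range]
        _ ≤ ∏ i ∈ Finset.range n, ‖q ^ (i + 1) - 1‖ :=
            Finset.prod_le_prod (fun i _ => by positivity)
              (fun i _ => qpow_sub_one ι q hq1 hι hqne (i + 1) (Nat.succ_ne_zero i))
    -- numerator
    have hnum : ‖∏ i ∈ Finset.range n, (lam - q ^ i)‖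
        ≤ ((p : ℝ) ^ δ * r) ^ n * ∏ i ∈ Finset.range n, Mi i := by
      rw [norm_prod]
      calc ∏ i ∈ Finset.range n, ‖lam - q ^ i‖
          ≤ ∏ i ∈ Finset.range n, (((p : ℝ) ^ δ * r) * Mi i) :=
            Finset.prod_le_prod (fun i _ => norm_nonneg _) (fun i _ => hstep i)
        _ = ((p : ℝ) ^ δ * r) ^ n * ∏ i ∈ Finset.range n, Mi i := by
            rw [Finset.prod_mul_distrib, Finset.prod_const, Finset.card_range]
    -- product of Mi
    have hMprod : ∏ i ∈ Finset.range n, Mi i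
        ≤ (p : ℝ) ^ (-((∑ j ∈ Finset.Icc 1 k'', ((A j n : ℕ) : ℝ)) + e * ((A (k'' + 1) n : ℕ) : ℝ))) := by
      have h1 : ∏ i ∈ Finset.range n, Mi i
          ≤ ∏ i ∈ Finset.range n, (p : ℝ) ^ (-(((cnt i : ℕ) : ℝ) + e * Ti i)) :=
        Finset.prod_le_prod (fun i _ => hMi_nonneg i) (fun i _ => M_le a k'' e he0 he1 i)
      refine h1.trans (le_of_eq ?_)
      rw [← rpow_sum_eq]
      congr 1
      have hsum_cnt : ∑ i ∈ Finset.range n, ((cnt i : ℕ) : ℝ)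
          = ∑ j ∈ Finset.Icc 1 k'', ((A j n : ℕ) : ℝ) := by
        have hnat : ∑ i ∈ Finset.range n, cnt i = ∑ j ∈ Finset.Icc 1 k'', A j n := by
          simp only [hcnt, hA, Finset.card_filter]
          rw [Finset.sum_comm]
        exact_mod_cast congrArg (fun t : ℕ => (t : ℝ)) hnat
      have hsum_T : ∑ i ∈ Finset.range n, Ti i = ((A (k'' + 1) n : ℕ) : ℝ) := by
        simp only [hTi, hA, Finset.sum_boole]
      rw [Finset.sum_neg_distrib, Finset.sum_add_distrib, ← Finset.mul_sum, hsum_cnt, hsum_T]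
    -- exponent inequality
    have hexp : δ * (n : ℝ) + (-((∑ j ∈ Finset.Icc 1 k'', ((A j n : ℕ) : ℝ))
          + e * ((A (k'' + 1) n : ℕ) : ℝ))) + (n : ℝ) / ((p : ℝ) - 1)
        ≤ (n : ℝ) * E + ((k'' : ℝ) + e) := by
      have h1 : ∑ j ∈ Finset.Icc 1 k'', ((n : ℝ) * ((p : ℝ)⁻¹) ^ j - 1)
          ≤ ∑ j ∈ Finset.Icc 1 k'', ((A j n : ℕ) : ℝ) :=
        Finset.sum_le_sum (fun j _ => A_ge a j n)
      have h3 : ∑ j ∈ Finset.Icc 1 k'', ((n : ℝ) * ((p : ℝ)⁻¹) ^ j - 1)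
          = (n : ℝ) * S - (k'' : ℝ) := by
        rw [Finset.sum_sub_distrib, ← Finset.mul_sum, Finset.sum_const, Nat.card_Icc]
        simp [hS]
      have h5 : (n : ℝ) * S - (k'' : ℝ) ≤ ∑ j ∈ Finset.Icc 1 k'', ((A j n : ℕ) : ℝ) := by
        rw [← h3]
        exact h1
      have h2 : (n : ℝ) * u - 1 ≤ ((A (k'' + 1) n : ℕ) : ℝ) := by
        have := A_ge a (k'' + 1) n
        rw [← hu] at this
        exact this
      have h4 : e * ((n : ℝ) * u - 1) ≤ e * ((A (k'' + 1) n : ℕ) : ℝ) :=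
        mul_le_mul_of_nonneg_left h2 he0
      rw [hE]
      have hexpand : (n : ℝ) * (δ + 1 / ((p : ℝ) - 1) - S - e * u) + ((k'' : ℝ) + e)
          = δ * (n : ℝ) + (n : ℝ) / ((p : ℝ) - 1) - (n : ℝ) * S - e * ((n : ℝ) * u)
            + (k'' : ℝ) + e := by ring
      rw [hexpand]
      linarith [h5, h4]
    -- assemble
    have hfrac : (((p : ℝ) ^ δ * r) ^ n * ∏ i ∈ Finset.range n, Mi i)
        / (‖((n.factorial : ℕ) : ℚ_[p])‖ * r ^ n)
        = ((p : ℝ) ^ δ) ^ n * (∏ i ∈ Finset.range n, Mi i)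
          * ‖((n.factorial : ℕ) : ℚ_[p])‖⁻¹ := by
      rw [mul_pow]
      field_simp
    calc ‖(∏ i ∈ Finset.range n, (lam - q ^ i)) /
          (∏ i ∈ Finset.range n, (q ^ (i + 1) - 1)) * x ^ n‖
        = ‖∏ i ∈ Finset.range n, (lam - q ^ i)‖ /
          ‖∏ i ∈ Finset.range n, (q ^ (i + 1) - 1)‖ * ‖x‖ ^ n := by
          rw [norm_mul, norm_div, norm_pow]
      _ ≤ ((((p : ℝ) ^ δ * r) ^ n * ∏ i ∈ Finset.range n, Mi i)
            / (‖((n.factorial : ℕ) : ℚ_[p])‖ * r ^ n)) * ‖x‖ ^ n := by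
          refine mul_le_mul_of_nonneg_right ?_ (by positivity)
          exact div_le_div₀ (by positivity) hnum (by positivity) hden
      _ = (((p : ℝ) ^ δ) ^ n * (∏ i ∈ Finset.range n, Mi i)
            * ‖((n.factorial : ℕ) : ℚ_[p])‖⁻¹) * ‖x‖ ^ n := by rw [hfrac]
      _ ≤ (((p : ℝ) ^ δ) ^ n
            * (p : ℝ) ^ (-((∑ j ∈ Finset.Icc 1 k'', ((A j n : ℕ) : ℝ))
                + e * ((A (k'' + 1) n : ℕ) : ℝ)))
            * (p : ℝ) ^ ((n : ℝ) / ((p : ℝ) - 1))) * ‖x‖ ^ n := by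
          refine mul_le_mul_of_nonneg_right ?_ (by positivity)
          refine mul_le_mul ?_ (factorial_inv_le n) (by positivity) (by positivity)
          exact mul_le_mul_of_nonneg_left hMprod (by positivity)
      _ = (p : ℝ) ^ (δ * (n : ℝ) + (-((∑ j ∈ Finset.Icc 1 k'', ((A j n : ℕ) : ℝ))
                + e * ((A (k'' + 1) n : ℕ) : ℝ))) + (n : ℝ) / ((p : ℝ) - 1)) * ‖x‖ ^ n := by
          rw [← Real.rpow_natCast ((p : ℝ) ^ δ) n, ← Real.rpow_mul hP0.le,
            ← Real.rpow_add hP0, ← Real.rpow_add hP0]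
      _ ≤ (p : ℝ) ^ ((n : ℝ) * E + ((k'' : ℝ) + e)) * ‖x‖ ^ n := by
          refine mul_le_mul_of_nonneg_right ?_ (by positivity)
          exact (Real.rpow_le_rpow_left_iff hP1).mpr hexp
      _ = (p : ℝ) ^ ((k'' : ℝ) + e) * (‖x‖ * (p : ℝ) ^ E) ^ n := by
          rw [Real.rpow_add hP0, mul_pow, ← Real.rpow_natCast ((p : ℝ) ^ E) n,
            ← Real.rpow_mul hP0.le]
          ring
  refine Summable.of_norm_bounded ?_ hbound
  refine Summable.mul_left _ ?_
  exact summable_geometric_of_lt_one (by positivity) hx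

end Main

end LSRaux


/-- If `dist(λ, q^{ℤ_p}) = |p|^{k+ε}|q-1|` with `k ∈ ℤ_{≥0}`, `ε ∈ [0,1)`, then the
series `Λ(x) = Σ_{n≥1} ((λ-1)(λ-q)⋯(λ-q^{n-1})/((q-1)⋯(q^n-1))) x^n` converges for
`|x| < |p|^{-(1/p^k)(ε/p - 1/(p-1))}`. Here `q^α`, `α ∈ ℤ_p`, is the sum of the
binomial series `Σ_n binom(α,n)(q-1)^n`, the p-adic binomial coefficients being
viewed in `K` through the canonical isometric embedding of `ℚ_p`. -/
theorem lambda_series_radius_of_dist {p : ℕ} [Fact p.Prime] {K : Type*}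
    [NontriviallyNormedField K] [IsUltrametricDist K] [CompleteSpace K] [IsAlgClosed K]
    (ι : ℚ_[p] →+* K) (hι : ∀ x : ℚ_[p], ‖ι x‖ = ‖x‖)
    (q : K) (hq : ‖q‖ = 1) (hroot : ∀ n : ℕ, 0 < n → q ^ n ≠ 1)
    (hq1 : ‖1 - q‖ < (p : ℝ) ^ (-(1 : ℝ) / ((p : ℝ) - 1)))
    (lam : K) (k : ℕ) (ε : ℝ) (hε0 : 0 ≤ ε) (hε1 : ε < 1)
    (hdist : (⨅ α : ℤ_[p],
        ‖lam - ∑' n : ℕ,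
          ι ((∏ i ∈ Finset.range n, ((α : ℚ_[p]) - (i : ℚ_[p]))) / (n.factorial : ℚ_[p]))
            * (q - 1) ^ n‖)
      = ((p : ℝ)⁻¹) ^ ((k : ℝ) + ε) * ‖q - 1‖) :
    ∀ x : K, ‖x‖ < ((p : ℝ)⁻¹) ^ (-(1 / (p : ℝ) ^ k) * (ε / p - 1 / ((p : ℝ) - 1))) →
      Summable fun n : ℕ =>
        (∏ i ∈ Finset.range n, (lam - q ^ i)) /
          (∏ i ∈ Finset.range n, (q ^ (i + 1) - 1)) * x ^ n := by
  intro x hx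
  have hP1 : (1 : ℝ) < p := LSRaux.one_lt_P
  have hP0 : (0 : ℝ) < p := lt_trans one_pos hP1
  have hPne1 : (p : ℝ) ≠ 1 := ne_of_gt hP1
  have hq1' : ‖q - 1‖ < (p : ℝ) ^ (-(1 : ℝ) / ((p : ℝ) - 1)) := by rwa [norm_sub_rev] at hq1
  have hqne : q ≠ 1 := by
    intro h
    exact hroot 1 one_pos (by rw [h, pow_one])
  have hr0 : (0 : ℝ) < ‖q - 1‖ := by
    rw [norm_pos_iff, sub_ne_zero]
    exact hqne
  rcases eq_or_ne x 0 with rfl | hx0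
  · refine summable_of_ne_finset_zero (s := {0}) ?_
    intro b hb
    simp only [Finset.mem_singleton] at hb
    rw [zero_pow hb, mul_zero]
  set B : ℝ := 1 / ((p : ℝ) - 1) with hB
  have hxpos : (0 : ℝ) < ‖x‖ := norm_pos_iff.mpr hx0
  set L : ℝ := Real.logb p ‖x‖ with hL
  have hxL : ‖x‖ = (p : ℝ) ^ L := (Real.rpow_logb hP0 hPne1 hxpos).symm
  have hradius : ((p : ℝ)⁻¹) ^ (-(1 / (p : ℝ) ^ k) * (ε / p - 1 / ((p : ℝ) - 1)))
      = (p : ℝ) ^ ((1 / (p : ℝ) ^ k) * (ε / p - B)) := by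
    rw [Real.inv_rpow hP0.le, ← Real.rpow_neg hP0.le, hB]
    congr 1
    ring
  have hL1 : L < (∑ j ∈ Finset.Icc 1 k, ((p : ℝ)⁻¹) ^ j) + ε * ((p : ℝ)⁻¹) ^ (k + 1) - B := by
    rw [hradius, hxL] at hx
    have h3 : L < (1 / (p : ℝ) ^ k) * (ε / p - B) := (Real.rpow_lt_rpow_left_iff hP1).mp hx
    have hpk : ((p : ℝ)) ^ k ≠ 0 := by positivity
    have hps : (p : ℝ) - 1 ≠ 0 := by linarith
    have hck : (∑ j ∈ Finset.Icc 1 k, ((p : ℝ)⁻¹) ^ j) + ε * ((p : ℝ)⁻¹) ^ (k + 1) - B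
        = (1 / (p : ℝ) ^ k) * (ε / p - B) := by
      rw [LSRaux.geom_S, hB, pow_succ, inv_pow]
      field_simp
      ring
    rw [hck]
    exact h3
  -- generic continuation
  have key : ∀ (k'' : ℕ) (e δ : ℝ), 0 ≤ e → e ≤ 1 → 0 ≤ δ →
      (-((k : ℝ) + ε) < δ - ((k'' : ℝ) + e)) →
      (L < (∑ j ∈ Finset.Icc 1 k'', ((p : ℝ)⁻¹) ^ j) + e * ((p : ℝ)⁻¹) ^ (k'' + 1) - B - δ) →
      Summable fun n : ℕ =>
        (∏ i ∈ Finset.range n, (lam - q ^ i)) /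
          (∏ i ∈ Finset.range n, (q ^ (i + 1) - 1)) * x ^ n := by
    intro k'' e δ he0' he1' hδ0' hgt hLlt
    have hinf : (⨅ α : ℤ_[p],
        ‖lam - ∑' n : ℕ,
          ι ((∏ i ∈ Finset.range n, ((α : ℚ_[p]) - (i : ℚ_[p]))) / (n.factorial : ℚ_[p]))
            * (q - 1) ^ n‖)
        < (p : ℝ) ^ (δ - ((k'' : ℝ) + e)) * ‖q - 1‖ := by
      rw [hdist]
      have h1 : ((p : ℝ)⁻¹) ^ ((k : ℝ) + ε) = (p : ℝ) ^ (-((k : ℝ) + ε)) := by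
        rw [Real.inv_rpow hP0.le, ← Real.rpow_neg hP0.le]
      rw [h1]
      exact mul_lt_mul_of_pos_right ((Real.rpow_lt_rpow_left_iff hP1).mpr hgt) hr0
    obtain ⟨a, haa⟩ := exists_lt_of_ciInf_lt hinf
    refine LSRaux.main ι hι q hq1' hqne lam k'' e δ he0' he1' hδ0' a haa.le x ?_
    rw [hxL, ← Real.rpow_add hP0]
    refine Real.rpow_lt_one_of_one_lt_of_neg hP1 ?_
    rw [hB] at hLlt
    linarith
  rcases lt_or_eq_of_le hε0 with hε | hε
  · -- ε > 0 : use k'' = k, δ = 0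
    set u0 : ℝ := ((p : ℝ)⁻¹) ^ (k + 1) with hu0
    have hu0pos : (0 : ℝ) < u0 := by positivity
    set S0 : ℝ := ∑ j ∈ Finset.Icc 1 k, ((p : ℝ)⁻¹) ^ j with hS0
    set e0 : ℝ := (L - (S0 - B)) / u0 with he0def
    have he0lt : e0 < ε := by
      rw [he0def, div_lt_iff₀ hu0pos]
      linarith [hL1]
    have hmul : e0 * u0 = L - (S0 - B) := by
      rw [he0def]
      field_simp
    set e : ℝ := max ((e0 + ε) / 2) (ε / 2) with he
    have hepos : 0 < e := lt_of_lt_of_le (by linarith) (le_max_right _ _)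
    have helt : e < ε := max_lt (by linarith) (by linarith)
    have hegt : e0 < e := lt_of_lt_of_le (by linarith) (le_max_left _ _)
    refine key k e 0 hepos.le (by linarith) le_rfl (by push_cast; linarith) ?_
    have := mul_lt_mul_of_pos_right hegt hu0pos
    rw [hmul] at this
    linarith
  · -- ε = 0
    rw [← hε] at hL1 key
    cases k with
    | zero =>
      have hS0 : (∑ j ∈ Finset.Icc 1 0, ((p : ℝ)⁻¹) ^ j) = 0 := by simp
      rw [hS0] at hL1
      simp only [Nat.cast_zero, zero_add, zero_mul] at hL1
      -- hL1 : L < 0 - B  (approximately)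
      have hLB : L < -B := by linarith
      refine key 0 0 ((-B - L) / 2) le_rfl zero_le_one (by linarith) (by norm_num; linarith) ?_
      rw [hS0]
      norm_num
      linarith
    | succ k' =>
      set u' : ℝ := ((p : ℝ)⁻¹) ^ (k' + 1) with hu'
      have hu'pos : (0 : ℝ) < u' := by positivity
      set S' : ℝ := ∑ j ∈ Finset.Icc 1 k', ((p : ℝ)⁻¹) ^ j with hS'
      have hsplit : (∑ j ∈ Finset.Icc 1 (k' + 1), ((p : ℝ)⁻¹) ^ j) = S' + u' := by
        rw [Finset.sum_Icc_succ_top (by omega : 1 ≤ k' + 1)]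
      rw [hsplit] at hL1
      -- hL1 : L < S' + u' + 0 * _ - B
      have hL2 : L < S' + u' - B := by
        have : (0:ℝ) * ((p : ℝ)⁻¹) ^ (k' + 1 + 1) = 0 := by ring
        linarith [hL1]
      set e0' : ℝ := (L - (S' - B)) / u' with he0'def
      have he0'lt : e0' < 1 := by
        rw [he0'def, div_lt_iff₀ hu'pos]
        linarith
      have hmul' : e0' * u' = L - (S' - B) := by
        rw [he0'def]
        field_simp
      set e : ℝ := max ((e0' + 1) / 2) (1 / 2) with he
      have hepos : 0 < e := lt_of_lt_of_le (by norm_num) (le_max_right _ _)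
      have helt : e < 1 := max_lt (by linarith) (by norm_num)
      have hegt : e0' < e := lt_of_lt_of_le (by linarith) (le_max_left _ _)
      refine key k' e 0 hepos.le helt.le le_rfl (by push_cast; linarith) ?_
      have := mul_lt_mul_of_pos_right hegt hu'pos
      rw [hmul'] at this
      linarith
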